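/- Let h and f be functions holomorphic on a neighborhood of 0 with f(0) ≠ 0, satisfying h(z) = z·f(h(z)) near 0 (so h(0) = 0). Then for any function g holomorphic at 0 and any n ≥ 1, the n-th Taylor coefficient of g(h(z)) at 0 equals the (n−1)-st Taylor coefficient of g'(z)·f(z)^n/n. -/

import Mathlib

open scoped Nat
open Filter Topology

namespace LagrangeAux

/-- The derivative of a function analytic at a point is analytic there. -/
lemma aderiv {p : ℂ → ℂ} {x : ℂ} (hp : AnalyticAt ℂ p x) : AnalyticAt ℂ (deriv p) x := by
  obtain ⟨s, hs, hmem⟩ := hp.eventually_analyticAt.exists_mem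
  exact (AnalyticOnNhd.deriv (fun y hy => hmem y hy)) x (mem_of_mem_nhds hs)

lemma itd_congr {p q : ℂ → ℂ} (hev : p =ᶠ[𝓝 (0:ℂ)] q) (k : ℕ) :
    iteratedDeriv k p 0 = iteratedDeriv k q 0 := by
  induction k generalizing p q with
  | zero => simpa using hev.eq_of_nhds
  | succ k ih => rw [iteratedDeriv_succ', iteratedDeriv_succ']; exact ih hev.deriv

lemma itd_add (k : ℕ) {A B : ℂ → ℂ} (hA : AnalyticAt ℂ A 0) (hB : AnalyticAt ℂ B 0) :
    iteratedDeriv k (fun z => A z + B z) 0 = iteratedDeriv k A 0 + iteratedDeriv k B 0 := by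
  induction k generalizing A B with
  | zero => simp
  | succ k ih =>
    have hev : deriv (fun z => A z + B z) =ᶠ[𝓝 (0:ℂ)] fun z => deriv A z + deriv B z := by
      filter_upwards [hA.eventually_analyticAt, hB.eventually_analyticAt] with z h1 h2
      exact deriv_add h1.differentiableAt h2.differentiableAt
    rw [iteratedDeriv_succ' (f := A), iteratedDeriv_succ' (f := B), iteratedDeriv_succ',
      itd_congr hev k]
    exact ih (aderiv hA) (aderiv hB)

lemma itd_cmul (k : ℕ) (c : ℂ) {p : ℂ → ℂ} (hp : AnalyticAt ℂ p 0) :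
    iteratedDeriv k (fun z => c * p z) 0 = c * iteratedDeriv k p 0 := by
  induction k generalizing p with
  | zero => simp
  | succ k ih =>
    have hev : deriv (fun z => c * p z) =ᶠ[𝓝 (0:ℂ)] fun z => c * deriv p z := by
      filter_upwards [hp.eventually_analyticAt] with z h1
      exact deriv_const_mul c h1.differentiableAt
    rw [iteratedDeriv_succ' (f := p), iteratedDeriv_succ', itd_congr hev k]
    exact ih (aderiv hp)

lemma itd_shift (k : ℕ) {q : ℂ → ℂ} (hq : AnalyticAt ℂ q 0) :
    iteratedDeriv (k+1) (fun z => z * q z) 0 = (k+1 : ℂ) * iteratedDeriv k q 0 := by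
  induction k generalizing q with
  | zero =>
    rw [iteratedDeriv_one]
    rw [deriv_fun_mul differentiableAt_fun_id hq.differentiableAt]
    simp
  | succ k ih =>
    have hev : deriv (fun z => z * q z) =ᶠ[𝓝 (0:ℂ)] fun z => q z + z * deriv q z := by
      filter_upwards [hq.eventually_analyticAt] with z h1
      rw [deriv_fun_mul differentiableAt_fun_id h1.differentiableAt]
      simp
    rw [iteratedDeriv_succ', itd_congr hev (k+1),
      itd_add (k+1) (A := q) (B := fun z => z * deriv q z) hq
        (by exact analyticAt_id.mul (aderiv hq)), ih (aderiv hq),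
      ← iteratedDeriv_succ']
    push_cast; ring


/-- Normalized Taylor coefficient at `0`. -/
noncomputable def tc (k : ℕ) (A : ℂ → ℂ) : ℂ := iteratedDeriv k A 0 / (k ! : ℂ)

lemma tc_congr {A B : ℂ → ℂ} (hev : A =ᶠ[𝓝 (0:ℂ)] B) (k : ℕ) : tc k A = tc k B := by
  rw [tc, tc, itd_congr hev k]

lemma tc_zero (A : ℂ → ℂ) : tc 0 A = A 0 := by simp [tc, iteratedDeriv_zero]

lemma tc_add (k : ℕ) {A B : ℂ → ℂ} (hA : AnalyticAt ℂ A 0) (hB : AnalyticAt ℂ B 0) :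
    tc k (fun z => A z + B z) = tc k A + tc k B := by
  rw [tc, tc, tc, itd_add k hA hB, add_div]

lemma tc_cmul (k : ℕ) (c : ℂ) {A : ℂ → ℂ} (hA : AnalyticAt ℂ A 0) :
    tc k (fun z => c * A z) = c * tc k A := by
  rw [tc, tc, itd_cmul k c hA, mul_div_assoc]

lemma tc_shift (k : ℕ) {A : ℂ → ℂ} (hA : AnalyticAt ℂ A 0) :
    tc (k+1) (fun z => z * A z) = tc k A := by
  rw [tc, tc, itd_shift k hA, Nat.factorial_succ]
  have hk : ((k:ℂ)+1) ≠ 0 := Nat.cast_add_one_ne_zero k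
  push_cast
  exact mul_div_mul_left _ _ hk

lemma tc_deriv (k : ℕ) (A : ℂ → ℂ) : tc k (deriv A) = (k+1 : ℂ) * tc (k+1) A := by
  rw [tc, tc, ← iteratedDeriv_succ', Nat.factorial_succ]
  have hk : ((k:ℂ)+1) ≠ 0 := Nat.cast_add_one_ne_zero k
  push_cast
  rw [← mul_div_assoc, mul_div_mul_left _ _ hk]

lemma tc_const (k : ℕ) (c : ℂ) : tc k (fun _ => c) = if k = 0 then c else 0 := by
  cases k with
  | zero => simp [tc_zero]
  | succ k =>
    have hk : ((k:ℂ)+1) ≠ 0 := Nat.cast_add_one_ne_zero k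
    have h1 := tc_deriv k (fun _ : ℂ => c)
    have h2 : deriv (fun _ : ℂ => c) = fun _ => (0:ℂ) := by
      funext z; exact deriv_const z c
    rw [h2] at h1
    have h4 : iteratedDeriv k (fun _ : ℂ => (0:ℂ)) 0 = 0 := by
      have := itd_cmul k 0 (analyticAt_const (v := (0:ℂ)) (x := (0:ℂ)))
      simpa using this
    have h3 : tc k (fun _ : ℂ => (0:ℂ)) = 0 := by simp [tc, h4]
    rw [h3] at h1
    have := (mul_eq_zero.mp h1.symm).resolve_left hk
    simp [this]


section Core

variable {h u : ℂ → ℂ} (hh : AnalyticAt ℂ h 0) (hu : AnalyticAt ℂ u 0)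
  (hu0 : u 0 ≠ 0) (heq' : h =ᶠ[𝓝 (0:ℂ)] fun z => z * u z)

include hh hu hu0 heq'

/-- `deriv h` agrees with `u + z·u'` near `0`. -/
lemma hder : deriv h =ᶠ[𝓝 (0:ℂ)] fun z => u z + z * deriv u z := by
  refine heq'.deriv.trans ?_
  filter_upwards [hu.eventually_analyticAt] with z hz
  rw [deriv_fun_mul differentiableAt_fun_id hz.differentiableAt]
  simp

/-- Key computation: the coefficient of `h'·u⁻ʲ⁺¹`. -/
lemma M0 (j : ℕ) :
    tc j (fun z => deriv h z * (u z)⁻¹ ^ (j+1)) = if j = 0 then 1 else 0 := by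
  have hune : ∀ᶠ z in 𝓝 (0:ℂ), u z ≠ 0 := hu.continuousAt.eventually_ne hu0
  have hv : AnalyticAt ℂ (fun z => (u z)⁻¹) 0 := hu.inv hu0
  have hEv : (fun z => deriv h z * (u z)⁻¹ ^ (j+1)) =ᶠ[𝓝 (0:ℂ)]
      fun z => (u z)⁻¹ ^ j + z * (deriv u z * (u z)⁻¹ ^ (j+1)) := by
    filter_upwards [hder hh hu hu0 heq', hune] with z h1 h2
    have huv : u z * (u z)⁻¹ ^ (j+1) = (u z)⁻¹ ^ j := by
      rw [pow_succ']
      rw [← mul_assoc, mul_inv_cancel₀ h2, one_mul]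
    rw [h1, add_mul, huv]
    ring
  rw [tc_congr hEv j]
  have hA1 : AnalyticAt ℂ (fun z => (u z)⁻¹ ^ j) 0 := hv.pow j
  have hA2 : AnalyticAt ℂ (fun z => deriv u z * (u z)⁻¹ ^ (j+1)) 0 :=
    (aderiv hu).mul (hv.pow (j+1))
  rw [tc_add j hA1 (by exact analyticAt_id.mul hA2)]
  cases j with
  | zero =>
    simp only [if_pos rfl, pow_zero]
    rw [tc_zero, tc_zero]
    simp
  | succ j' =>
    rw [if_neg (Nat.succ_ne_zero j')]
    rw [tc_shift j' hA2]
    have hdv : deriv (fun z => (u z)⁻¹ ^ (j'+1)) =ᶠ[𝓝 (0:ℂ)]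
        fun z => -((j':ℂ)+1) * (deriv u z * (u z)⁻¹ ^ (j'+1+1)) := by
      filter_upwards [hu.eventually_analyticAt, hune] with z hz h2
      rw [deriv_fun_pow (f := fun z => (u z)⁻¹) (hz.differentiableAt.inv h2), deriv_fun_inv'' hz.differentiableAt h2]
      simp only [Nat.add_sub_cancel]
      field_simp
      push_cast; linear_combination (((j':ℂ)+1) * (u z)⁻¹ ^ j' * deriv u z) * (by rw [← mul_pow, mul_inv_cancel₀ h2, one_pow] : u z ^ 2 * (u z)⁻¹ ^ 2 = 1)
    have e1 : tc j' (deriv (fun z => (u z)⁻¹ ^ (j'+1))) =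
        ((j':ℂ)+1) * tc (j'+1) (fun z => (u z)⁻¹ ^ (j'+1)) := tc_deriv j' _
    have e2 : tc j' (deriv (fun z => (u z)⁻¹ ^ (j'+1))) =
        -((j':ℂ)+1) * tc j' (fun z => deriv u z * (u z)⁻¹ ^ (j'+1+1)) := by
      rw [tc_congr hdv j', tc_cmul j' _ hA2]
    have hj : ((j':ℂ)+1) ≠ 0 := Nat.cast_add_one_ne_zero j'
    have e3 : tc j' (fun z => deriv u z * (u z)⁻¹ ^ (j'+1+1)) =
        - tc (j'+1) (fun z => (u z)⁻¹ ^ (j'+1)) := by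
      refine mul_left_cancel₀ hj ?_
      have := e2.symm.trans e1
      linear_combination -this
    rw [e3, add_neg_cancel]

/-- Main substitution lemma. -/
lemma ML (N : ℕ) : ∀ (w : ℂ → ℂ), AnalyticAt ℂ w 0 →
    tc N (fun z => w (h z) * deriv h z * (u z)⁻¹ ^ (N+1)) = tc N w := by
  have h0 : h 0 = 0 := by
    have := heq'.eq_of_nhds
    simpa using this
  have hune : ∀ᶠ z in 𝓝 (0:ℂ), u z ≠ 0 := hu.continuousAt.eventually_ne hu0
  have hv : AnalyticAt ℂ (fun z => (u z)⁻¹) 0 := hu.inv hu0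
  induction N with
  | zero =>
    intro w hw
    rw [tc_zero, tc_zero, h0]
    have hd0 : deriv h 0 = u 0 := by
      have := (hder hh hu hu0 heq').eq_of_nhds
      simpa using this
    rw [hd0, pow_one]
    rw [mul_assoc, mul_inv_cancel₀ hu0, mul_one]
  | succ N ih =>
    intro w hw
    obtain ⟨p, hp⟩ := hw
    set w₁ : ℂ → ℂ := dslope w 0 with hw₁def
    have hw₁ : AnalyticAt ℂ w₁ 0 := hp.has_fpower_series_dslope_fslope.analyticAt
    have hdecomp : ∀ y, w y = w 0 + y * w₁ y := by
      intro y
      have hd := sub_smul_dslope w 0 y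
      rw [sub_zero, smul_eq_mul] at hd
      rw [hw₁def, hd]
      ring
    have hw₁h : AnalyticAt ℂ (fun z => w₁ (h z)) 0 := by
      have h1 : AnalyticAt ℂ w₁ (h 0) := by rw [h0]; exact hw₁
      exact h1.comp hh
    have hχ : AnalyticAt ℂ (fun z => w₁ (h z) * deriv h z * (u z)⁻¹ ^ (N+1)) 0 :=
      (hw₁h.mul (aderiv hh)).mul (hv.pow (N+1))
    have hE1 : AnalyticAt ℂ (fun z => deriv h z * (u z)⁻¹ ^ (N+1+1)) 0 :=
      (aderiv hh).mul (hv.pow (N+2))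
    have hEv : (fun z => w (h z) * deriv h z * (u z)⁻¹ ^ (N+1+1)) =ᶠ[𝓝 (0:ℂ)]
        fun z => w 0 * (deriv h z * (u z)⁻¹ ^ (N+1+1)) +
          z * (w₁ (h z) * deriv h z * (u z)⁻¹ ^ (N+1)) := by
      filter_upwards [heq', hune] with z hz h2
      have huv : u z * (u z)⁻¹ ^ (N+1+1) = (u z)⁻¹ ^ (N+1) := by
        rw [pow_succ']
        rw [← mul_assoc, mul_inv_cancel₀ h2, one_mul]
      rw [hdecomp (h z), hz, ← huv]
      ring
    rw [tc_congr hEv (N+1)]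
    rw [tc_add (N+1) (by exact analyticAt_const.mul hE1)
      (by exact analyticAt_id.mul hχ)]
    rw [tc_cmul (N+1) _ hE1, tc_shift N hχ]
    have hM := M0 hh hu hu0 heq' (N+1)
    rw [if_neg (Nat.succ_ne_zero N)] at hM
    rw [hM, mul_zero, zero_add, ih w₁ hw₁]
    have hwEv : w =ᶠ[𝓝 (0:ℂ)] fun z => w 0 + z * w₁ z :=
      Filter.EventuallyEq.of_eq (funext hdecomp)
    rw [tc_congr hwEv (N+1)]
    rw [tc_add (N+1) (by exact analyticAt_const) (by exact analyticAt_id.mul hw₁),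
      tc_const (N+1) (w 0), if_neg (Nat.succ_ne_zero N), zero_add, tc_shift N hw₁]

end Core

end LagrangeAux



open LagrangeAux in
/-- Lagrange inversion formula: if `h(z) = z·f(h(z))` near `0` with `f(0) ≠ 0`,
then for every `g` holomorphic at `0` and `n ≥ 1`,
`coef_n(g ∘ h) = coef_{n-1}(g' · f^n / n)`. -/
theorem stmt_7 (h f g : ℂ → ℂ)
    (hh : AnalyticAt ℂ h 0) (hf : AnalyticAt ℂ f 0) (hg : AnalyticAt ℂ g 0)
    (hf0 : f 0 ≠ 0) (heq : ∀ᶠ z in nhds (0 : ℂ), h z = z * f (h z))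
    (n : ℕ) (hn : 1 ≤ n) :
    iteratedDeriv n (fun z => g (h z)) 0 / (n ! : ℂ) =
      iteratedDeriv (n - 1) (fun z => deriv g z * f z ^ n / n) 0 / ((n - 1)! : ℂ) := by
  obtain ⟨N, rfl⟩ : ∃ N, n = N + 1 := ⟨n - 1, (Nat.succ_pred_eq_of_pos hn).symm⟩
  simp only [Nat.add_sub_cancel]
  have h0 : h 0 = 0 := by simpa using heq.self_of_nhds
  set u : ℂ → ℂ := fun z => f (h z) with hudef
  have hu : AnalyticAt ℂ u 0 := by
    have h1 : AnalyticAt ℂ f (h 0) := by rw [h0]; exact hf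
    exact h1.comp hh
  have hu0 : u 0 ≠ 0 := by simpa [hudef, h0] using hf0
  have heq' : h =ᶠ[𝓝 (0:ℂ)] fun z => z * u z := heq
  have hune : ∀ᶠ z in 𝓝 (0:ℂ), u z ≠ 0 := hu.continuousAt.eventually_ne hu0
  set w : ℂ → ℂ := fun y => deriv g y * f y ^ (N+1) with hwdef
  have hw : AnalyticAt ℂ w 0 := (aderiv hg).mul (hf.pow (N+1))
  have hgh : deriv (fun z => g (h z)) =ᶠ[𝓝 (0:ℂ)] fun z => deriv g (h z) * deriv h z := by
    have hgat : ∀ᶠ z in 𝓝 (0:ℂ), AnalyticAt ℂ g (h z) := by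
      have ht : Filter.Tendsto h (𝓝 (0:ℂ)) (𝓝 (0:ℂ)) := by
        have h2 := hh.continuousAt
        rwa [ContinuousAt, h0] at h2
      exact ht.eventually hg.eventually_analyticAt
    filter_upwards [hh.eventually_analyticAt, hgat] with z h1 h2
    exact deriv_comp z h2.differentiableAt h1.differentiableAt
  have hE : (fun z => deriv g (h z) * deriv h z) =ᶠ[𝓝 (0:ℂ)]
      fun z => w (h z) * deriv h z * (u z)⁻¹ ^ (N+1) := by
    filter_upwards [hune] with z h2
    have huv : (u z)^(N+1) * ((u z)⁻¹)^(N+1) = 1 := by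
      rw [← mul_pow, mul_inv_cancel₀ h2, one_pow]
    simp only [hwdef, hudef]
    calc deriv g (h z) * deriv h z
        = deriv g (h z) * ((f (h z)) ^ (N+1) * ((f (h z))⁻¹) ^ (N+1)) * deriv h z := by
          rw [huv]; ring
      _ = deriv g (h z) * f (h z) ^ (N+1) * deriv h z * ((f (h z))⁻¹) ^ (N+1) := by ring
  have hML := ML hh hu hu0 heq' N w hw
  have key1 : tc N (deriv (fun z => g (h z))) = ((N:ℂ)+1) * tc (N+1) (fun z => g (h z)) :=
    tc_deriv N _
  have key2 : tc N (deriv (fun z => g (h z))) = tc N w := by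
    rw [tc_congr hgh N, tc_congr hE N, hML]
  have hNz : ((N:ℂ)+1) ≠ 0 := Nat.cast_add_one_ne_zero N
  have e : ((N:ℂ)+1) * tc (N+1) (fun z => g (h z)) = tc N w := by rw [← key1, key2]
  have key3 : tc N (fun z => deriv g z * f z ^ (N+1) / ((N+1 : ℕ) : ℂ)) =
      ((N:ℂ)+1)⁻¹ * tc N w := by
    have hfn : (fun z => deriv g z * f z ^ (N+1) / ((N+1 : ℕ) : ℂ)) =
        fun z => ((N:ℂ)+1)⁻¹ * w z := by
      funext z
      simp only [hwdef]
      push_cast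
      ring
    rw [hfn, tc_cmul N _ hw]
  calc iteratedDeriv (N+1) (fun z => g (h z)) 0 / (((N+1)! : ℕ) : ℂ)
      = tc (N+1) (fun z => g (h z)) := rfl
    _ = ((N:ℂ)+1)⁻¹ * tc N w := by rw [← e, inv_mul_cancel_left₀ hNz]
    _ = tc N (fun z => deriv g z * f z ^ (N+1) / ((N+1 : ℕ) : ℂ)) := key3.symm
    _ = iteratedDeriv N (fun z => deriv g z * f z ^ (N+1) / ((N+1 : ℕ) : ℂ)) 0 / ((N ! : ℕ) : ℂ) :=
        rfl
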